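/- For the heat equation A_m = σ d²/dx² on {f ∈ H²(0,π) : f(π) = 0} with boundary operator G f = f'(0), the Dirichlet operator is (D_λ u)(x) = sinh(√(λ/σ)(π - x)) / (√(λ/σ) cosh(√(λ/σ) π)) · u for λ > 0 and (D_0 u)(x) = (π - x) u; in particular M D_0 = k π for the perturbation M f = -k f(0). -/

import Mathlib

open Real

/-- For the heat operator `A_m = σ d²/dx²` on
`{f ∈ H²(0,π) : f(π) = 0}` with boundary operator `G f = -f'(0)`, the Dirichlet
operator is `(D_λ u)(x) = sinh(√(λ/σ)(π-x)) / (√(λ/σ) cosh(√(λ/σ) π)) · u` for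
`λ > 0`, and `(D_0 u)(x) = (π - x) u`; in particular `M D_0 = k π` for the
boundary perturbation `M f = k f(0)`. -/
theorem heat_dirichlet_operator
    (σ k : ℝ) (hσ : 0 < σ) :
    -- the case `λ > 0`:
    (∀ lam : ℝ, 0 < lam →
      ∀ Dfun : ℝ → ℝ → ℝ,
        (Dfun = fun u x =>
          Real.sinh (Real.sqrt (lam / σ) * (π - x)) /
            (Real.sqrt (lam / σ) * Real.cosh (Real.sqrt (lam / σ) * π)) * u) →
        ∀ u : ℝ, ∃ F' : ℝ → ℝ,
          -- `σ (D_λ u)'' = λ (D_λ u)`: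
          (∀ x : ℝ, HasDerivAt (Dfun u) (F' x) x) ∧
          (∀ x : ℝ, HasDerivAt F' (σ⁻¹ * (lam * Dfun u x)) x) ∧
          -- `(D_λ u)(π) = 0` and `G (D_λ u) = -(D_λ u)'(0) = u`:
          Dfun u π = 0 ∧ -F' 0 = u) ∧
    -- the case `λ = 0`:
    (∀ D0fun : ℝ → ℝ → ℝ, (D0fun = fun u x => (π - x) * u) →
      ∀ u : ℝ, ∃ F' : ℝ → ℝ,
        (∀ x : ℝ, HasDerivAt (D0fun u) (F' x) x) ∧
        (∀ x : ℝ, HasDerivAt F' 0 x) ∧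
        D0fun u π = 0 ∧ -F' 0 = u ∧
        -- `M D_0 = k π`:
        k * D0fun u 0 = (k * π) * u) := by
  constructor
  · intro lam hlam Dfun hD u
    subst hD
    set s : ℝ := Real.sqrt (lam / σ) with hs
    have hs2 : s ^ 2 = lam / σ := Real.sq_sqrt (by positivity)
    have hspos : 0 < s := Real.sqrt_pos.2 (by positivity)
    have hcpos : 0 < Real.cosh (s * π) := Real.cosh_pos _
    refine ⟨fun x => -Real.cosh (s * (π - x)) / Real.cosh (s * π) * u, ?_, ?_, ?_, ?_⟩
    · intro x
      have hinner : HasDerivAt (fun x : ℝ => s * (π - x)) (-s) x := by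
        simpa using ((hasDerivAt_id x).const_sub π).const_mul s
      have h1 : HasDerivAt (fun x : ℝ => Real.sinh (s * (π - x)))
          (Real.cosh (s * (π - x)) * (-s)) x := (Real.hasDerivAt_sinh _).comp x hinner
      have := (h1.div_const (s * Real.cosh (s * π))).mul_const u
      refine this.congr_deriv ?_
      field_simp
    · intro x
      have hinner : HasDerivAt (fun x : ℝ => s * (π - x)) (-s) x := by
        simpa using ((hasDerivAt_id x).const_sub π).const_mul s
      have h1 : HasDerivAt (fun x : ℝ => Real.cosh (s * (π - x)))
          (Real.sinh (s * (π - x)) * (-s)) x := (Real.hasDerivAt_cosh _).comp x hinner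
      have := ((h1.neg.div_const (Real.cosh (s * π))).mul_const u)
      refine this.congr_deriv ?_
      have hls : lam = s ^ 2 * σ := by
        field_simp at hs2; linarith [hs2]
      rw [hls]
      field_simp
    · simp
    · field_simp
      simp
  · intro D0fun hD u
    subst hD
    refine ⟨fun _ => -u, ?_, ?_, ?_, ?_, ?_⟩
    · intro x
      simpa using ((hasDerivAt_id x).const_sub π).mul_const u
    · intro x; exact hasDerivAt_const x (-u)
    · simp
    · simp
    · simp; ring
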